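/- The number of lattice points in the closed ℓ¹-ball of radius n in ℤ^k, i.e. Σ_{l=0}^{n} N(k,l), satisfies Σ_{l=0}^{n} N(k,l) ≤ T^{-n} · ((1+T)/(1-T))^k for every real T ∈ (0,1). In particular, taking k = n and T = √2 - 1, the number of points of ℤ^n of ℓ¹-norm at most n is at most (3 + 2√2)^n. -/

import Mathlib

/-- `latticeShellCount x y` is the number of integer vectors of length `x`
with ℓ¹-norm equal to `y`. -/
noncomputable def latticeShellCount (x y : ℕ) : ℕ :=
  Nat.card {m : Fin x → ℤ // (∑ i, |m i|) = (y : ℤ)}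

noncomputable def A (k l : ℕ) : Finset (Fin k → ℤ) :=
  (Fintype.piFinset fun _ => Finset.Icc (-(l:ℤ)) (l:ℤ)).filter fun m => (∑ i, |m i|) = (l:ℤ)

lemma mem_A {k l : ℕ} {m : Fin k → ℤ} : m ∈ A k l ↔ (∑ i, |m i|) = (l:ℤ) := by
  constructor
  · intro h; exact (Finset.mem_filter.mp h).2
  · intro h
    refine Finset.mem_filter.mpr ⟨Fintype.mem_piFinset.mpr fun i => ?_, h⟩
    rw [Finset.mem_Icc]
    have h1 : |m i| ≤ (l:ℤ) :=
      h ▸ Finset.single_le_sum (f := fun i => |m i|) (fun j _ => abs_nonneg _) (Finset.mem_univ i)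
    constructor
    · linarith [neg_abs_le (m i)]
    · linarith [le_abs_self (m i)]

lemma shell_eq (k l : ℕ) : latticeShellCount k l = (A k l).card := by
  have hset : {m : Fin k → ℤ | (∑ i, |m i|) = (l:ℤ)} = ↑(A k l) := by
    ext m; simp [mem_A]
  rw [latticeShellCount]
  rw [show {m : Fin k → ℤ // (∑ i, |m i|) = (l:ℤ)} = ↥{m : Fin k → ℤ | (∑ i, |m i|) = (l:ℤ)} from rfl]
  rw [Nat.card_coe_set_eq, hset, Set.ncard_coe_finset]

lemma card_succ_le (k l : ℕ) :
    (A (k+1) l).card ≤ ∑ a ∈ Finset.Icc (-(l:ℤ)) (l:ℤ), (A k ((l:ℤ) - |a|).toNat).card := by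
  rw [← Finset.card_sigma]
  apply Finset.card_le_card_of_injOn (fun m => ⟨m 0, Fin.tail m⟩)
  · intro m hm
    have hsum := mem_A.mp hm
    rw [Fin.sum_univ_succ] at hsum
    have htail : (∑ i, |Fin.tail m i|) = (l:ℤ) - |m 0| := by
      simp only [Fin.tail]; linarith
    have hnn : (0:ℤ) ≤ ∑ i, |Fin.tail m i| :=
      Finset.sum_nonneg fun i _ => abs_nonneg _
    have habs : |m 0| ≤ (l:ℤ) := by linarith [htail ▸ hnn]
    refine Finset.mem_sigma.mpr ⟨Finset.mem_Icc.mpr ⟨by linarith [neg_abs_le (m 0)],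
      by linarith [le_abs_self (m 0)]⟩, ?_⟩
    apply mem_A.mpr
    have : (((l:ℤ) - |m 0|).toNat : ℤ) = (l:ℤ) - |m 0| :=
      Int.toNat_of_nonneg (by linarith)
    rw [this, htail]
  · intro m _ m' _ h
    have h1 : m 0 = m' 0 := congrArg Sigma.fst h
    have h2 : Fin.tail m = Fin.tail m' := congrArg Sigma.snd h
    rw [← Fin.cons_self_tail m, ← Fin.cons_self_tail m', h1, h2]

lemma icc_succ (n : ℕ) : Finset.Icc (-((n:ℤ)+1)) ((n:ℤ)+1) =
    insert (-((n:ℤ)+1)) (insert ((n:ℤ)+1) (Finset.Icc (-(n:ℤ)) (n:ℤ))) := by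
  ext a
  simp only [Finset.mem_Icc, Finset.mem_insert]
  omega

lemma absPowSum (T : ℝ) (hT0 : 0 < T) (hT1 : T < 1) (n : ℕ) :
    ∑ a ∈ Finset.Icc (-(n:ℤ)) (n:ℤ), T ^ a.natAbs ≤ (1 + T) / (1 - T) := by
  have h1T : (0:ℝ) < 1 - T := by linarith
  have key : ∀ n : ℕ, ∑ a ∈ Finset.Icc (-(n:ℤ)) (n:ℤ), T ^ a.natAbs
      = 1 + 2 * ∑ m ∈ Finset.range n, T ^ (m+1) := by
    intro n
    induction n with
    | zero => simp
    | succ n ih =>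
      have : ((n:ℤ)+1) = ((n+1 : ℕ) : ℤ) := by push_cast; ring
      rw [show (((n+1:ℕ)):ℤ) = (n:ℤ)+1 by push_cast; ring, icc_succ n]
      rw [Finset.sum_insert (by simp only [Finset.mem_insert, Finset.mem_Icc]; omega),
          Finset.sum_insert (by simp only [Finset.mem_Icc]; omega), ih,
          Finset.sum_range_succ]
      have e1 : (-((n:ℤ)+1)).natAbs = n+1 := by omega
      have e2 : ((n:ℤ)+1).natAbs = n+1 := by omega
      rw [e1, e2]; ring
  rw [key]
  have hgeom : ∑ m ∈ Finset.range n, T ^ m ≤ (1 - T)⁻¹ := by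
    rw [geom_sum_eq (by linarith : T ≠ 1),
        div_le_iff_of_neg (by linarith : T - 1 < 0)]
    have he : (1 - T)⁻¹ * (T - 1) = -1 := by field_simp; ring
    rw [he]
    linarith [pow_pos hT0 n]
  have hsum' : ∑ m ∈ Finset.range n, T ^ (m+1) ≤ T * (1 - T)⁻¹ := by
    have he : ∑ m ∈ Finset.range n, T ^ (m+1) = T * ∑ m ∈ Finset.range n, T ^ m := by
      rw [Finset.mul_sum]; exact Finset.sum_congr rfl fun m _ => by ring
    rw [he]
    exact mul_le_mul_of_nonneg_left hgeom hT0.le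
  have heq : (1 + T) / (1 - T) = 1 + 2 * (T * (1 - T)⁻¹) := by
    field_simp; ring
  rw [heq]; linarith

lemma gen_bound (T : ℝ) (hT0 : 0 < T) (hT1 : T < 1) :
    ∀ k n : ℕ, ∑ l ∈ Finset.range (n+1), ((A k l).card : ℝ) * T ^ l ≤ ((1+T)/(1-T)) ^ k := by
  intro k
  have h1T : (0:ℝ) < 1 - T := by linarith
  have hC1 : (1:ℝ) ≤ (1+T)/(1-T) := by
    rw [le_div_iff₀ h1T]; linarith
  induction k with
  | zero =>
    intro n
    have hA0 : ∀ l, l ∈ Finset.range (n+1) → ((A 0 l).card : ℝ) * T ^ l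
        = if l = 0 then 1 else 0 := by
      intro l _
      cases l with
      | zero =>
        have : A 0 0 = {(fun i => i.elim0 : Fin 0 → ℤ)} := by
          ext m
          simp only [mem_A, Finset.mem_singleton]
          constructor
          · intro _; funext i; exact i.elim0
          · intro _; simp
        simp [this]
      | succ l =>
        have : A 0 (l+1) = ∅ := by
          ext m
          simp only [mem_A, Finset.notMem_empty, iff_false]
          simp
          omega
        simp [this]
    rw [Finset.sum_congr rfl hA0, Finset.sum_ite_eq' (Finset.range (n+1)) 0 (fun _ => (1:ℝ))]
    simp [hC1]
  | succ k ih =>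
    intro n
    have hTn : ∀ l : ℕ, (0:ℝ) ≤ T ^ l := fun l => pow_nonneg hT0.le l
    calc ∑ l ∈ Finset.range (n+1), ((A (k+1) l).card : ℝ) * T ^ l
        ≤ ∑ l ∈ Finset.range (n+1), ∑ a ∈ Finset.Icc (-(l:ℤ)) (l:ℤ),
            ((A k ((l:ℤ) - |a|).toNat).card : ℝ) * T ^ l := by
          apply Finset.sum_le_sum
          intro l _
          rw [← Finset.sum_mul]
          apply mul_le_mul_of_nonneg_right _ (hTn l)
          exact_mod_cast card_succ_le k l
      _ = ∑ a ∈ Finset.Icc (-(n:ℤ)) (n:ℤ), ∑ l ∈ Finset.Icc a.natAbs n,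
            ((A k ((l:ℤ) - |a|).toNat).card : ℝ) * T ^ l := by
          apply Finset.sum_comm'
          intro l a
          simp only [Finset.mem_range, Finset.mem_Icc, Nat.lt_succ_iff]
          omega
      _ ≤ ∑ a ∈ Finset.Icc (-(n:ℤ)) (n:ℤ), T ^ a.natAbs *
            ∑ j ∈ Finset.range (n+1), ((A k j).card : ℝ) * T ^ j := by
          apply Finset.sum_le_sum
          intro a ha
          have han : a.natAbs ≤ n := by
            rw [Finset.mem_Icc] at ha; omega
          rw [← Finset.Ico_add_one_right_eq_Icc, Finset.sum_Ico_eq_sum_range]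
          have hterm : ∀ i, ((A k (((a.natAbs + i : ℕ) : ℤ) - |a|).toNat).card : ℝ)
              * T ^ (a.natAbs + i) = T ^ a.natAbs * (((A k i).card : ℝ) * T ^ i) := by
            intro i
            have : (((a.natAbs + i : ℕ) : ℤ) - |a|).toNat = i := by
              rw [Int.abs_eq_natAbs]; push_cast; omega
            rw [this, pow_add]; ring
          rw [Finset.sum_congr rfl fun i _ => hterm i, ← Finset.mul_sum]
          apply mul_le_mul_of_nonneg_left _ (hTn a.natAbs)
          apply Finset.sum_le_sum_of_subset_of_nonneg
          · exact Finset.range_subset_range.mpr (by omega)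
          · intro j _ _
            exact mul_nonneg (Nat.cast_nonneg _) (hTn j)
      _ = (∑ a ∈ Finset.Icc (-(n:ℤ)) (n:ℤ), T ^ a.natAbs) *
            ∑ j ∈ Finset.range (n+1), ((A k j).card : ℝ) * T ^ j := by
          rw [Finset.sum_mul]
      _ ≤ ((1+T)/(1-T)) * ((1+T)/(1-T)) ^ k := by
          apply mul_le_mul (absPowSum T hT0 hT1 n) (ih n)
          · apply Finset.sum_nonneg
            intro j _
            exact mul_nonneg (Nat.cast_nonneg _) (hTn j)
          · linarith
      _ = ((1+T)/(1-T)) ^ (k+1) := by ring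


theorem lattice_ball_count_bound :
    (∀ k n : ℕ, ∀ T : ℝ, 0 < T → T < 1 →
      ((∑ l ∈ Finset.range (n + 1), latticeShellCount k l : ℕ) : ℝ) ≤
        ((1 + T) / (1 - T)) ^ k / T ^ n) ∧
    (∀ n : ℕ,
      ((∑ l ∈ Finset.range (n + 1), latticeShellCount n l : ℕ) : ℝ) ≤
        (3 + 2 * Real.sqrt 2) ^ n) := by
  have main : ∀ k n : ℕ, ∀ T : ℝ, 0 < T → T < 1 →
      ((∑ l ∈ Finset.range (n + 1), latticeShellCount k l : ℕ) : ℝ) ≤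
        ((1 + T) / (1 - T)) ^ k / T ^ n := by
    intro k n T hT0 hT1
    have hgen := gen_bound T hT0 hT1 k n
    have hTn : (0:ℝ) < T ^ n := pow_pos hT0 n
    rw [le_div_iff₀ hTn]
    calc ((∑ l ∈ Finset.range (n + 1), latticeShellCount k l : ℕ) : ℝ) * T ^ n
        = ∑ l ∈ Finset.range (n + 1), ((A k l).card : ℝ) * T ^ n := by
          push_cast [shell_eq, Finset.sum_mul]; ring
      _ ≤ ∑ l ∈ Finset.range (n + 1), ((A k l).card : ℝ) * T ^ l := by
          apply Finset.sum_le_sum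
          intro l hl
          have hln : l ≤ n := by
            rw [Finset.mem_range] at hl; omega
          exact mul_le_mul_of_nonneg_left
            (pow_le_pow_of_le_one hT0.le hT1.le hln) (Nat.cast_nonneg _)
      _ ≤ ((1 + T) / (1 - T)) ^ k := hgen
  refine ⟨main, fun n => ?_⟩
  set s := Real.sqrt 2 with hs
  have hs2 : s ^ 2 = 2 := Real.sq_sqrt (by norm_num)
  have hs0 : 0 ≤ s := Real.sqrt_nonneg 2
  have hs1 : 1 < s := by nlinarith
  have hslt : s < 2 := by nlinarith
  have h := main n n (s - 1) (by linarith) (by linarith)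
  refine h.trans (le_of_eq ?_)
  rw [div_eq_iff (pow_ne_zero n (ne_of_gt (by linarith : (0:ℝ) < s - 1))), ← mul_pow]
  apply congrArg (· ^ n)
  rw [div_eq_iff (by intro hc; nlinarith : (1 - (s-1) : ℝ) ≠ 0)]
  nlinarith [hs2]
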